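/- Consider the delay differential system x_i'(t) = −d_i(t)x_i(t) + Σ_{j≠i} a_{ij}(t)x_j(t) + Σ_{k=1}^{m} β_{ik}(t) h_{ik}(t, x_i(t − τ_{ik}(t))), i = 1, …, n, under hypotheses (H0)–(H4). Then: (a) every solution x on [0, ∞) with initial condition φ ∈ C_0 satisfies x_i(t) > 0 for all t ≥ 0 and all i; and (b) the system is dissipative: there exists a constant L > 0, depending only on the coefficient functions and nonlinearities (not on φ), such that every solution x on [0, ∞) with initial condition φ ∈ C_0 satisfies limsup_{t→∞} x_i(t) ≤ L for all i = 1, …, n. -/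

import Mathlib

open Real Set Filter Topology

set_option maxHeartbeats 1000000

lemma freq_slope_max_lt {n : ℕ} (ne : (Finset.univ : Finset (Fin n)).Nonempty)
    (z : Fin n → ℝ → ℝ) (w : Fin n → ℝ) (x r : ℝ)
    (hct : ∀ i, Filter.Tendsto (z i) (𝓝[>] x) (𝓝 (z i x)))
    (hder : ∀ i, Filter.Tendsto (slope (z i) x) (𝓝[>] x) (𝓝 (w i)))
    (hw : ∀ i, z i x = Finset.univ.sup' ne (fun j => z j x) → w i < r) :
    ∃ᶠ y in 𝓝[>] x, slope (fun t => Finset.univ.sup' ne (fun j => z j t)) x y < r := by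
  set V : ℝ → ℝ := fun t => Finset.univ.sup' ne (fun j => z j t) with hV
  by_contra hcon
  rw [Filter.not_frequently] at hcon
  have hconP : ∀ᶠ y in 𝓝[>] x, r ≤ slope V x y := hcon.mono (fun y hy => not_lt.1 hy)
  have hpig : ∃ i, ∃ᶠ y in 𝓝[>] x, z i y = V y ∧ r ≤ slope V x y := by
    by_contra hno
    simp only [not_exists, Filter.not_frequently] at hno
    have hall : ∀ᶠ y in 𝓝[>] x, ∀ i, ¬(z i y = V y ∧ r ≤ slope V x y) :=
      Filter.eventually_all.2 hno
    obtain ⟨y, hy1, hy2⟩ := (hall.and hconP).exists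
    obtain ⟨i, -, hi⟩ := Finset.exists_mem_eq_sup' ne (fun j => z j y)
    exact hy1 i ⟨hi.symm, hy2⟩
  obtain ⟨i, hfreq⟩ := hpig
  by_cases hcase : z i x = V x
  · have hwi : w i < r := hw i hcase
    have hev : ∀ᶠ y in 𝓝[>] x, slope (z i) x y < r :=
      (hder i).eventually_lt_const hwi
    obtain ⟨y, ⟨hy1, hy2⟩, hy3⟩ := (hfreq.and_eventually hev).exists
    have heq : slope V x y = slope (z i) x y := by
      simp only [slope_def_field, hy1, hcase]
    linarith [heq ▸ hy2]
  · have hle : z i x ≤ V x := Finset.le_sup' (fun j => z j x) (Finset.mem_univ i)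
    have hlt : z i x < V x := lt_of_le_of_ne hle hcase
    obtain ⟨j, -, hj⟩ := Finset.exists_mem_eq_sup' ne (fun j => z j x)
    set mid := (z i x + V x) / 2 with hmid
    have h1 : z i x < mid := by rw [hmid]; linarith
    have hVj : V x = z j x := hj
    have h2 : mid < z j x := by rw [hmid, ← hVj]; linarith
    have hev1 : ∀ᶠ y in 𝓝[>] x, z i y < mid := (hct i).eventually (Iio_mem_nhds h1)
    have hev2 : ∀ᶠ y in 𝓝[>] x, mid < z j y := (hct j).eventually (Ioi_mem_nhds h2)
    obtain ⟨y, ⟨hy1, -⟩, hy2, hy3⟩ := (hfreq.and_eventually (hev1.and hev2)).exists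
    have : z j y ≤ V y := Finset.le_sup' (fun j => z j y) (Finset.mem_univ j)
    rw [hy1] at hy2
    linarith

/-- Linear barrier bound for the max of finitely many functions. -/
lemma max_barrier {n : ℕ} (ne : (Finset.univ : Finset (Fin n)).Nonempty)
    (z w : Fin n → ℝ → ℝ) (a b c0 : ℝ)
    (hz : ∀ i, ContinuousOn (z i) (Icc a b))
    (hw : ∀ i, ∀ t ∈ Ico a b, HasDerivAt (z i) (w i t) t)
    (hc : ∀ t ∈ Ico a b, ∀ i, z i t = Finset.univ.sup' ne (fun j => z j t) → w i t ≤ c0) :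
    ∀ t ∈ Icc a b, (Finset.univ.sup' ne fun j => z j t)
      ≤ (Finset.univ.sup' ne fun j => z j a) + c0 * (t - a) := by
  set V : ℝ → ℝ := fun t => Finset.univ.sup' ne (fun j => z j t) with hVdef
  set B : ℝ → ℝ := fun t => V a + c0 * (t - a) with hBdef
  have hVc : ContinuousOn V (Icc a b) :=
    ContinuousOn.finset_sup'_apply ne (fun i _ => hz i)
  have key : ∀ t ∈ Icc a b, V t ≤ B t := by
    apply image_le_of_liminf_slope_right_le_deriv_boundary hVc
    · simp [hBdef]
    · exact (continuousOn_const.add (continuousOn_const.mul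
        (continuousOn_id.sub continuousOn_const)))
    · intro t ht
      exact (hasDerivWithinAt_const t _ (V a)).add
        (((hasDerivWithinAt_id t (Ici t)).sub_const a).const_mul c0) |>.congr_deriv (by ring)
    · intro t ht r hr
      apply freq_slope_max_lt ne z (fun i => w i t) t r
      · intro i
        have h1 : ContinuousWithinAt (z i) (Icc a b) t := hz i t (Ico_subset_Icc_self ht)
        have h2 : 𝓝[>] t ≤ 𝓝[Icc a b] t := by
          rw [← nhdsWithin_Ioc_eq_nhdsGT ht.2]
          exact nhdsWithin_mono _ (fun y hy => ⟨le_of_lt (lt_of_le_of_lt ht.1 hy.1), hy.2⟩)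
        exact h1.tendsto.mono_left h2
      · intro i
        have := (hasDerivAt_iff_tendsto_slope.1 (hw i t ht))
        exact this.mono_left (nhdsWithin_mono _ (fun y hy => ne_of_gt hy))
      · intro i hi
        exact lt_of_le_of_lt (hc t ht i hi) hr
  intro t ht
  exact key t ht

lemma per_reduce {f : ℝ → ℝ} {ω : ℝ} (hω : 0 < ω) (hper : ∀ t, f (t + ω) = f t) (t : ℝ) :
    ∃ y ∈ Icc 0 ω, f t = f y := by
  have hp : Function.Periodic f ω := hper
  obtain ⟨y, hy, hfy⟩ := hp.exists_mem_Ico₀ hω t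
  exact ⟨y, ⟨hy.1, le_of_lt hy.2⟩, hfy⟩

lemma per_bound {f : ℝ → ℝ} {ω : ℝ} (hω : 0 < ω) (hper : ∀ t, f (t + ω) = f t)
    (hf : Continuous f) : ∃ C, ∀ t, f t ≤ C := by
  obtain ⟨y0, hy0, hmax⟩ := isCompact_Icc.exists_isMaxOn (nonempty_Icc.2 (le_of_lt hω))
    hf.continuousOn
  refine ⟨f y0, fun t => ?_⟩
  obtain ⟨y, hy, hfy⟩ := per_reduce hω hper t
  rw [hfy]; exact hmax hy

lemma per_nat {f : ℝ → ℝ} {ω : ℝ} (hper : ∀ t, f (t + ω) = f t) (N : ℕ) (s : ℝ) :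
    f (s + N * ω) = f s := by
  induction N with
  | zero => simp
  | succ k ih =>
    have : s + ((k:ℕ)+1 : ℕ) * ω = (s + k * ω) + ω := by push_cast; ring
    rw [this, hper, ih]

lemma pos_solution {n m : ℕ}
    (d : Fin n → ℝ → ℝ) (a : Fin n → Fin n → ℝ → ℝ)
    (β : Fin n → Fin m → ℝ → ℝ) (τd : Fin n → Fin m → ℝ → ℝ)
    (h : Fin n → Fin m → ℝ → ℝ → ℝ) (τ : ℝ) (hτ0 : 0 ≤ τ)
    (hτle : ∀ i k t, τd i k t ≤ τ) (hτnneg : ∀ i k t, 0 ≤ τd i k t)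
    (hdcont : ∀ i, Continuous (d i))
    (hanneg : ∀ i j t, j ≠ i → 0 ≤ a i j t)
    (hβnneg : ∀ i k t, 0 ≤ β i k t)
    (hhnneg : ∀ i k t y, 0 ≤ y → 0 ≤ h i k t y)
    (x : ℝ → Fin n → ℝ)
    (hx : ∀ i, ContinuousOn (fun t => x t i) (Set.Ici (-τ)))
    (hx0 : ∀ i, ∀ θ ∈ Set.Icc (-τ) 0, 0 ≤ x θ i)
    (hxpos0 : ∀ i, 0 < x 0 i)
    (hx' : ∀ t > (0 : ℝ), ∀ i, HasDerivAt (fun s => x s i)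
        (-d i t * x t i + ∑ j ∈ Finset.univ.erase i, a i j t * x t j
          + ∑ k, β i k t * h i k t (x (t - τd i k t) i)) t) :
    ∀ t ≥ (0 : ℝ), ∀ i, 0 < x t i := by
  by_contra hcon
  push_neg at hcon
  obtain ⟨t₁, ht₁, i₁, hi₁⟩ := hcon
  set A : Set ℝ := {t | 0 ≤ t ∧ ∃ i, x t i ≤ 0} with hA
  have hAne : A.Nonempty := ⟨t₁, ht₁, i₁, hi₁⟩
  have hAbdd : BddBelow A := ⟨0, fun t ht => ht.1⟩
  have hsub : Icc (0:ℝ) t₁ ⊆ Ici (-τ) := fun s hs => le_trans (neg_nonpos_of_nonneg hτ0) hs.1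
  have hAclosed : IsClosed A := by
    have : A = ⋃ i : Fin n, (Ici (0:ℝ) ∩ (Ici (-τ) ∩ (fun t => x t i) ⁻¹' Iic 0)) := by
      ext t
      simp only [hA, mem_setOf_eq, mem_iUnion, mem_inter_iff, mem_Ici, mem_preimage, mem_Iic]
      constructor
      · rintro ⟨ht, i, hi⟩
        exact ⟨i, ht, le_trans (neg_nonpos_of_nonneg hτ0) ht, hi⟩
      · rintro ⟨i, ht, -, hi⟩; exact ⟨ht, i, hi⟩
    rw [this]
    exact isClosed_iUnion_of_finite (fun i => isClosed_Ici.inter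
      (((hx i).preimage_isClosed_of_isClosed isClosed_Ici isClosed_Iic)))
  set T := sInf A with hT
  have hTA : T ∈ A := hAclosed.csInf_mem hAne hAbdd
  have hT0 : 0 ≤ T := hTA.1
  obtain ⟨i, hi⟩ := hTA.2
  have hTpos : 0 < T := by
    rcases lt_or_eq_of_le hT0 with h' | h'
    · exact h'
    · exact absurd hi (not_le.2 (h' ▸ hxpos0 i))
  -- positivity strictly before T
  have hbefore : ∀ s ∈ Ico (0:ℝ) T, ∀ j, 0 < x s j := by
    intro s hs j
    by_contra hneg
    exact absurd (csInf_le hAbdd ⟨hs.1, j, le_of_not_gt hneg⟩) (not_le.2 hs.2)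
  -- continuity at points > -τ is full continuity
  have hcontAt : ∀ j, ∀ s, -τ < s → ContinuousAt (fun t => x t j) s := by
    intro j s hs
    exact (hx j).continuousAt (mem_nhds_iff.2 ⟨Ioi (-τ), fun y hy => mem_Ici.2 (le_of_lt (mem_Ioi.1 hy)), isOpen_Ioi, hs⟩)
  -- nonnegativity on [-τ, T]
  have hnn : ∀ s ∈ Icc (-τ) T, ∀ j, 0 ≤ x s j := by
    intro s hs j
    rcases le_or_gt s 0 with h' | h'
    · exact hx0 j s ⟨hs.1, h'⟩
    rcases lt_or_eq_of_le hs.2 with h'' | h''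
    · exact le_of_lt (hbefore s ⟨le_of_lt h', h''⟩ j)
    · rw [h'']
      by_contra hneg
      push_neg at hneg
      have hca : ContinuousAt (fun t => x t j) T :=
        hcontAt j T (lt_of_le_of_lt (neg_nonpos_of_nonneg hτ0) hTpos)
      have hev : ∀ᶠ y in 𝓝 T, x y j < 0 := hca.eventually (Iio_mem_nhds hneg)
      have hev2 : ∀ᶠ y in 𝓝 T, 0 < y := Ioi_mem_nhds hTpos
      have hev3 : ∀ᶠ y in 𝓝[<] T, x y j < 0 ∧ 0 < y :=
        (hev.and hev2).filter_mono nhdsWithin_le_nhds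
      obtain ⟨y, ⟨hy1, hy2⟩, hy3⟩ := (hev3.and self_mem_nhdsWithin).exists
      exact absurd (hbefore y ⟨le_of_lt hy2, hy3⟩ j) (not_lt.2 (le_of_lt hy1))
  -- the integrating factor
  set D : ℝ → ℝ := fun t => ∫ s in (0:ℝ)..t, d i s with hD
  have hDder : ∀ t, HasDerivAt D (d i t) t := fun t =>
    ((hdcont i).integral_hasStrictDerivAt 0 t).hasDerivAt
  have hDcont : Continuous D := continuous_iff_continuousAt.2 (fun t => (hDder t).continuousAt)
  set y : ℝ → ℝ := fun t => x t i * Real.exp (D t) with hy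
  have hycont : ContinuousOn y (Icc 0 T) :=
    ((hx i).mono (fun s hs => le_trans (neg_nonpos_of_nonneg hτ0) hs.1)).mul
      (Real.continuous_exp.comp hDcont).continuousOn
  have hyder : ∀ t ∈ Ioo (0:ℝ) T, HasDerivAt y
      ((-d i t * x t i + ∑ j ∈ Finset.univ.erase i, a i j t * x t j
          + ∑ k, β i k t * h i k t (x (t - τd i k t) i)) * Real.exp (D t)
        + x t i * (Real.exp (D t) * d i t)) t := by
    intro t ht
    exact (hx' t ht.1 i).mul ((hDder t).exp)
  have hynn : ∀ t ∈ Ioo (0:ℝ) T, 0 ≤ (-d i t * x t i + ∑ j ∈ Finset.univ.erase i, a i j t * x t j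
          + ∑ k, β i k t * h i k t (x (t - τd i k t) i)) * Real.exp (D t)
        + x t i * (Real.exp (D t) * d i t) := by
    intro t ht
    have hS2 : 0 ≤ ∑ j ∈ Finset.univ.erase i, a i j t * x t j := by
      apply Finset.sum_nonneg
      intro j hj
      exact mul_nonneg (hanneg i j t (Finset.ne_of_mem_erase hj))
        (le_of_lt (hbefore t ⟨le_of_lt ht.1, ht.2⟩ j))
    have hS3 : 0 ≤ ∑ k, β i k t * h i k t (x (t - τd i k t) i) := by
      apply Finset.sum_nonneg
      intro k _
      refine mul_nonneg (hβnneg i k t) (hhnneg i k t _ ?_)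
      refine hnn (t - τd i k t) ⟨?_, ?_⟩ i
      · linarith [hτle i k t, ht.1]
      · linarith [hτnneg i k t, ht.2]
    have hE : (0:ℝ) < Real.exp (D t) := Real.exp_pos _
    have : (-d i t * x t i + ∑ j ∈ Finset.univ.erase i, a i j t * x t j
          + ∑ k, β i k t * h i k t (x (t - τd i k t) i)) * Real.exp (D t)
        + x t i * (Real.exp (D t) * d i t)
        = (∑ j ∈ Finset.univ.erase i, a i j t * x t j
          + ∑ k, β i k t * h i k t (x (t - τd i k t) i)) * Real.exp (D t) := by ring
    rw [this]
    positivity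
  have hmono : MonotoneOn y (Icc 0 T) := by
    apply monotoneOn_of_deriv_nonneg (convex_Icc 0 T) hycont
    · rw [interior_Icc]
      exact fun t ht => ((hyder t ht).differentiableAt).differentiableWithinAt
    · rw [interior_Icc]
      intro t ht
      rw [(hyder t ht).deriv]
      exact hynn t ht
  have h0T : y 0 ≤ y T := hmono ⟨le_refl 0, hT0⟩ ⟨hT0, le_refl T⟩ hT0
  have hy0 : y 0 = x 0 i := by
    simp [hy, hD, intervalIntegral.integral_same]
  have hyT : y T ≤ 0 := mul_nonpos_of_nonpos_of_nonneg hi (le_of_lt (Real.exp_pos _))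
  rw [hy0] at h0T
  exact absurd (lt_of_lt_of_le (hxpos0 i) h0T) (not_lt.2 hyT)

lemma qmul_aux {M ω η : ℝ} (hη : η ≠ 0) :
    (M * ω / η + M) * (2 * η) = 2 * (M * ω) + 2 * M * η := by
  field_simp

lemma dissip {n m : ℕ} (hn : 0 < n) (ω : ℝ) (hω : 0 < ω)
    (d : Fin n → ℝ → ℝ) (a : Fin n → Fin n → ℝ → ℝ)
    (β : Fin n → Fin m → ℝ → ℝ) (τd : Fin n → Fin m → ℝ → ℝ)
    (h : Fin n → Fin m → ℝ → ℝ → ℝ)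
    (hdper : ∀ i t, d i (t + ω) = d i t)
    (haper : ∀ i j t, a i j (t + ω) = a i j t)
    (hβper : ∀ i k t, β i k (t + ω) = β i k t)
    (hdcont : ∀ i, Continuous (d i))
    (hacont : ∀ i j, j ≠ i → Continuous (a i j))
    (hanneg : ∀ i j t, j ≠ i → 0 ≤ a i j t)
    (u : Fin n → ℝ) (hu : ∀ i, 0 < u i) (t0 : ℝ)
    (hH2 : ∀ i t, ∑ j ∈ Finset.univ.erase i, a i j t * u j ≤ d i t * u i)
    (hH2s : ∀ i, ∑ j ∈ Finset.univ.erase i, a i j t0 * u j < d i t0 * u i)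
    (hβcont : ∀ i k, Continuous (β i k)) (hβnneg : ∀ i k t, 0 ≤ β i k t)
    (hhbdd : ∀ i k, ∃ B, ∀ t y, 0 ≤ y → h i k t y ≤ B)
    (hhnneg : ∀ i k t y, 0 ≤ y → 0 ≤ h i k t y)
    (hh0 : ∀ i k t, h i k t 0 = 0)
    (τ : ℝ) (hτ0 : 0 ≤ τ) (hτle : ∀ i k t, τd i k t ≤ τ) (hτnneg : ∀ i k t, 0 ≤ τd i k t) :
    (∃ L > (0 : ℝ), ∀ x : ℝ → Fin n → ℝ,
      (∀ i, ContinuousOn (fun t => x t i) (Set.Ici (-τ))) →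
      (∀ i, ∀ θ ∈ Set.Icc (-τ) 0, 0 ≤ x θ i) →
      (∀ i, 0 < x 0 i) →
      (∀ t > (0 : ℝ), ∀ i, HasDerivAt (fun s => x s i)
          (-d i t * x t i + ∑ j ∈ Finset.univ.erase i, a i j t * x t j
            + ∑ k, β i k t * h i k t (x (t - τd i k t) i)) t) →
      ∀ i, Filter.limsup (fun t => x t i) Filter.atTop ≤ L) := by
  haveI npe : Nonempty (Fin n) := ⟨⟨0, hn⟩⟩
  have ne : (Finset.univ : Finset (Fin n)).Nonempty := Finset.univ_nonempty
  -- bounds on the nonlinearities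
  choose Bh hBh using hhbdd
  have hBh0 : ∀ i k, 0 ≤ Bh i k := by
    intro i k
    have := hBh i k 0 0 le_rfl
    rwa [hh0] at this
  choose Bβ hBβ using fun i k => per_bound hω (hβper i k) (hβcont i k)
  have hBβ0 : ∀ i k, 0 ≤ Bβ i k := fun i k => le_trans (hβnneg i k 0) (hBβ i k 0)
  set N : Fin n → ℝ := fun i => ∑ k, Bβ i k * Bh i k with hNdef
  have hN0 : ∀ i, 0 ≤ N i := fun i =>
    Finset.sum_nonneg fun k _ => mul_nonneg (hBβ0 i k) (hBh0 i k)
  set umax : ℝ := Finset.univ.sup' ne u with humaxdef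
  have hule : ∀ i, u i ≤ umax := fun i => Finset.le_sup' u (Finset.mem_univ i)
  obtain ⟨i₀⟩ := npe
  have humax : 0 < umax := lt_of_lt_of_le (hu i₀) (hule i₀)
  set M : ℝ := (Finset.univ.sup' ne fun i => N i / u i) + 1 with hMdef
  have hNM : ∀ i, N i / u i ≤ M - 1 := by
    intro i
    have := Finset.le_sup' (fun i => N i / u i) (Finset.mem_univ i)
    simp only [hMdef]; linarith
  have hM0 : (0:ℝ) < M := by
    have h1 : (0:ℝ) ≤ N i₀ / u i₀ := div_nonneg (hN0 i₀) (le_of_lt (hu i₀))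
    have h3 : (0:ℝ) ≤ Finset.univ.sup' ne fun i => N i / u i :=
      le_trans h1 (Finset.le_sup' (fun i => N i / u i) (Finset.mem_univ i₀))
    rw [hMdef]
    linarith
  -- the margin functions F i
  set F : Fin n → ℝ → ℝ := fun i t => d i t * u i - ∑ j ∈ Finset.univ.erase i, a i j t * u j
    with hFdef
  have hFper : ∀ i t, F i (t + ω) = F i t := by
    intro i t
    simp only [hFdef, hdper]
    congr 1
    exact Finset.sum_congr rfl fun j hj => by rw [haper]
  have hFcont : ∀ i, Continuous (F i) := by
    intro i
    apply Continuous.sub ((hdcont i).mul continuous_const)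
    exact continuous_finset_sum _ fun j hj =>
      ((hacont i j (Finset.ne_of_mem_erase hj)).mul continuous_const)
  have hFt0 : ∀ i, 0 < F i t0 := fun i => sub_pos.2 (hH2s i)
  -- window selection
  set G : ℝ → ℝ := fun t => Finset.univ.inf' ne fun i => F i t with hGdef
  have hGcont : Continuous G := Continuous.finset_inf'_apply ne fun i _ => hFcont i
  have hGt0 : 0 < G t0 := by
    rw [hGdef]
    simp only [Finset.lt_inf'_iff]
    exact fun i _ => hFt0 i
  set κ : ℝ := G t0 / 2 with hκdef
  have hκ : 0 < κ := by positivity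
  have hev : ∀ᶠ s in 𝓝 t0, κ < G s := hGcont.continuousAt.eventually_const_lt (by
    rw [hκdef]; linarith)
  obtain ⟨ε, hε, hball⟩ := Metric.eventually_nhds_iff.1 hev
  set η : ℝ := min (ε/2) (ω/4) with hηdef
  have hη : 0 < η := lt_min (by linarith) (by linarith)
  have hη4 : η ≤ ω/4 := min_le_right _ _
  have hwin : ∀ s ∈ Icc (t0 - η) (t0 + η), ∀ i, κ ≤ F i s := by
    intro s hs i
    have hd : dist s t0 < ε := by
      rw [Real.dist_eq]
      have h1 : |s - t0| ≤ η := abs_le.2 ⟨by linarith [hs.1], by linarith [hs.2]⟩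
      have h2 : η < ε := lt_of_le_of_lt (min_le_left _ _) (by linarith)
      linarith
    have := hball hd
    exact le_of_lt (lt_of_lt_of_le this (Finset.inf'_le _ (Finset.mem_univ i)))
  have hwinN : ∀ (N' : ℕ) s, s ∈ Icc (t0 - η + N' * ω) (t0 + η + N' * ω) → ∀ i, κ ≤ F i s := by
    intro N' s hs i
    have heq : F i s = F i (s - N' * ω) := by
      have := per_nat (hFper i) N' (s - N' * ω)
      rw [sub_add_cancel] at this
      exact this
    rw [heq]
    exact hwin _ ⟨by linarith [hs.1], by linarith [hs.2]⟩ i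
  -- key constants
  set c : ℝ := κ / umax with hcdef
  have hc : 0 < c := div_pos hκ humax
  set q : ℝ := M * ω / η + M with hqdef
  have hq : 0 < q := by positivity
  set K : ℝ := (M + q) / c with hKdef
  have hK : 0 < K := by positivity
  set k0 : ℕ := ⌈(1 + η + |t0|) / ω⌉₊ with hk0def
  set p : ℝ := t0 - η + k0 * ω with hpdef
  have hk0 : 1 + η + |t0| ≤ k0 * ω := by
    rw [← div_le_iff₀ hω]
    exact Nat.le_ceil _
  have hp1 : 1 ≤ p := by
    have := abs_le.1 (le_refl |t0|)
    rw [hpdef]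
    have h1 : -|t0| ≤ t0 := neg_abs_le t0
    linarith
  have hwinp : ∀ (k : ℕ) s, p + k * ω ≤ s → s ≤ p + k * ω + 2 * η → ∀ i, κ ≤ F i s := by
    intro k s h1 h2 i
    apply hwinN (k0 + k) s _ i
    constructor
    · push_cast
      rw [hpdef] at h1
      push_cast at h1
      linarith
    · push_cast
      rw [hpdef] at h2
      push_cast at h2
      linarith
  refine ⟨umax * (K + 2 * M * ω), by positivity, ?_⟩
  intro x hx hx0 hxpos0 hx'
  have hpos : ∀ t ≥ (0:ℝ), ∀ i, 0 < x t i :=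
    pos_solution d a β τd h τ hτ0 hτle hτnneg hdcont hanneg hβnneg hhnneg x hx hx0 hxpos0 hx'
  have xnn : ∀ s, -τ ≤ s → ∀ i, 0 ≤ x s i := by
    intro s hs i
    rcases le_or_gt s 0 with h' | h'
    · exact hx0 i s ⟨hs, h'⟩
    · exact le_of_lt (hpos s (le_of_lt h') i)
  set z : Fin n → ℝ → ℝ := fun i t => x t i / u i with hzdef
  set wf : Fin n → ℝ → ℝ := fun i t => (-d i t * x t i
      + ∑ j ∈ Finset.univ.erase i, a i j t * x t j
      + ∑ k, β i k t * h i k t (x (t - τd i k t) i)) / u i with hwfdef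
  set V : ℝ → ℝ := fun t => Finset.univ.sup' ne fun j => z j t with hVdef
  have hVle : ∀ i t, z i t ≤ V t := fun i t => Finset.le_sup' (fun j => z j t) (Finset.mem_univ i)
  have hVpos : ∀ t, 0 ≤ t → 0 < V t := fun t ht =>
    lt_of_lt_of_le (div_pos (hpos t ht i₀) (hu i₀)) (hVle i₀ t)
  have hzcont : ∀ (A B : ℝ), 0 ≤ A → ∀ i, ContinuousOn (z i) (Icc A B) := by
    intro A B hA i
    apply ContinuousOn.div_const
    exact (hx i).mono (fun s hs => le_trans (neg_nonpos_of_nonneg hτ0) (le_trans hA hs.1))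
  have hzder : ∀ t, 0 < t → ∀ i, HasDerivAt (z i) (wf i t) t := by
    intro t ht i
    exact (hx' t ht i).div_const (u i)
  have hS3 : ∀ t, 0 ≤ t → ∀ i, ∑ k, β i k t * h i k t (x (t - τd i k t) i) ≤ N i := by
    intro t ht i
    apply Finset.sum_le_sum
    intro k _
    have harg : (0:ℝ) ≤ x (t - τd i k t) i := xnn _ (by linarith [hτle i k t]) i
    exact mul_le_mul (hBβ i k t) (hBh i k _ _ harg) (hhnneg i k _ _ harg) (hBβ0 i k)
  have hS2 : ∀ t, 0 ≤ t → ∀ i, ∑ j ∈ Finset.univ.erase i, a i j t * x t j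
      ≤ (∑ j ∈ Finset.univ.erase i, a i j t * u j) * V t := by
    intro t ht i
    rw [Finset.sum_mul]
    apply Finset.sum_le_sum
    intro j hj
    rw [mul_assoc]
    apply mul_le_mul_of_nonneg_left _ (hanneg i j t (Finset.ne_of_mem_erase hj))
    have h1 : z j t ≤ V t := hVle j t
    have hxz : x t j = u j * z j t := by
      simp only [hzdef]
      rw [mul_div_assoc', mul_div_cancel_left₀ _ (ne_of_gt (hu j))]
    rw [hxz]
    exact mul_le_mul_of_nonneg_left h1 (le_of_lt (hu j))
  have hboundM : ∀ t, 0 < t → ∀ i, z i t = V t → wf i t ≤ M := by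
    intro t ht i hcontact
    have hV0 : 0 ≤ V t := le_of_lt (hVpos t (le_of_lt ht))
    have h1 : (∑ j ∈ Finset.univ.erase i, a i j t * u j) * V t ≤ d i t * u i * V t :=
      mul_le_mul_of_nonneg_right (hH2 i t) hV0
    have hx_eq : x t i = u i * V t := by
      rw [← hcontact]
      simp only [hzdef]
      rw [mul_div_assoc', mul_div_cancel_left₀ _ (ne_of_gt (hu i))]
    have h2 := hS2 t (le_of_lt ht) i
    have h3 := hS3 t (le_of_lt ht) i
    have hnum : -d i t * x t i + ∑ j ∈ Finset.univ.erase i, a i j t * x t j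
        + ∑ k, β i k t * h i k t (x (t - τd i k t) i) ≤ N i := by
      rw [hx_eq]; linarith [h1, h2, h3]
    have h4 : wf i t ≤ N i / u i := by
      simp only [hwfdef]
      exact (div_le_div_iff_of_pos_right (hu i)).2 hnum
    exact le_trans h4 (le_trans (hNM i) (by linarith))
  have hboundW : ∀ t, 0 < t → (∀ i', κ ≤ F i' t) → K ≤ V t → ∀ i, z i t = V t → wf i t ≤ -q := by
    intro t ht hFt hKV i hcontact
    have hV0 : 0 ≤ V t := le_of_lt (hVpos t (le_of_lt ht))
    have hFi := hFt i
    have haui : ∑ j ∈ Finset.univ.erase i, a i j t * u j ≤ d i t * u i - κ := by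
      simp only [hFdef] at hFi
      linarith
    have h1 : (∑ j ∈ Finset.univ.erase i, a i j t * u j) * V t ≤ (d i t * u i - κ) * V t :=
      mul_le_mul_of_nonneg_right haui hV0
    have hx_eq : x t i = u i * V t := by
      rw [← hcontact]
      simp only [hzdef]
      rw [mul_div_assoc', mul_div_cancel_left₀ _ (ne_of_gt (hu i))]
    have h2 := hS2 t (le_of_lt ht) i
    have h3 := hS3 t (le_of_lt ht) i
    have hnum : -d i t * x t i + ∑ j ∈ Finset.univ.erase i, a i j t * x t j
        + ∑ k, β i k t * h i k t (x (t - τd i k t) i) ≤ -κ * V t + N i := by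
      rw [hx_eq]; linarith [h1, h2, h3]
    have h4 : wf i t ≤ (-κ * V t + N i) / u i := by
      simp only [hwfdef]
      exact (div_le_div_iff_of_pos_right (hu i)).2 hnum
    have h5 : (-κ * V t + N i) / u i = (-κ * V t) / u i + N i / u i := add_div _ _ _
    have hκV : -κ * V t ≤ 0 := mul_nonpos_of_nonpos_of_nonneg (by linarith) hV0
    have h6 : (-κ * V t) / u i ≤ (-κ * V t) / umax := by
      rw [div_le_div_iff₀ (hu i) humax]
      exact mul_le_mul_of_nonpos_left (hule i) hκV
    have h7 : (-κ * V t) / umax = -(c * V t) := by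
      rw [hcdef, div_mul_eq_mul_div, neg_mul, neg_div]
    have h8 : -(c * V t) ≤ -(c * K) := neg_le_neg (mul_le_mul_of_nonneg_left hKV (le_of_lt hc))
    have hcK : c * K = M + q := by
      rw [hKdef, mul_div_assoc', mul_div_cancel_left₀ _ (ne_of_gt hc)]
    have h9 := hNM i
    calc wf i t ≤ (-κ * V t) / u i + N i / u i := by rw [← h5]; exact h4
      _ ≤ -(c * K) + (M - 1) := by
          have h6' : (-κ * V t) / u i ≤ -(c * K) := le_trans h6 (h7.le.trans h8)
          linarith
      _ ≤ -q := by linarith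
  -- barrier wrapper
  have barAt : ∀ (A B c0 : ℝ), 0 < A → A ≤ B →
      (∀ t ∈ Ico A B, ∀ i, z i t = V t → wf i t ≤ c0) → V B ≤ V A + c0 * (B - A) := by
    intro A B c0 hA hAB hcontact
    exact max_barrier ne z wf A B c0 (fun i => hzcont A B (le_of_lt hA) i)
      (fun i t ht => hzder t (lt_of_lt_of_le hA ht.1) i)
      (fun t ht i hi => hcontact t ht i hi) B ⟨hAB, le_refl B⟩
  clear_value z wf V N umax M F G κ η c q K k0 p
  have h2η : 2 * η ≤ ω := by linarith
  have hApos : ∀ k : ℕ, 0 < p + k * ω := by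
    intro k
    have : (0:ℝ) ≤ k * ω := mul_nonneg (Nat.cast_nonneg k) (le_of_lt hω)
    linarith
  -- one-period estimate
  have key1 : ∀ k : ℕ, V (p + k * ω + ω) ≤ max (V (p + k * ω) - M * ω) (K + M * ω) := by
    intro k
    set A := p + k * ω with hAdef
    have hA : 0 < A := hApos k
    by_cases hdip : ∃ s ∈ Icc A (A + 2 * η), V s < K
    · obtain ⟨s, hs, hVs⟩ := hdip
      have hspos : 0 < s := lt_of_lt_of_le hA hs.1
      have h1 : V (A + ω) ≤ V s + M * ((A + ω) - s) :=
        barAt s (A + ω) M hspos (by linarith [hs.2])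
          (fun t ht i hi => hboundM t (lt_of_lt_of_le hspos ht.1) i hi)
      have h2 : M * ((A + ω) - s) ≤ M * ω :=
        mul_le_mul_of_nonneg_left (by linarith [hs.1]) (le_of_lt hM0)
      refine le_trans ?_ (le_max_right _ _)
      linarith
    · push_neg at hdip
      have hW : V (A + 2 * η) ≤ V A + (-q) * ((A + 2 * η) - A) := by
        apply barAt A (A + 2 * η) (-q) hA (by linarith)
        intro t ht i hi
        refine hboundW t (lt_of_lt_of_le hA ht.1) ?_ ?_ i hi
        · exact fun i' => hwinp k t ht.1 (by linarith [ht.2]) i'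
        · exact hdip t ⟨ht.1, le_of_lt ht.2⟩
      have hE : V (A + ω) ≤ V (A + 2 * η) + M * ((A + ω) - (A + 2 * η)) := by
        apply barAt (A + 2 * η) (A + ω) M (by linarith) (by linarith)
        intro t ht i hi
        exact hboundM t (by linarith [ht.1]) i hi
      have hq2η : q * (2 * η) = 2 * (M * ω) + 2 * M * η := by
        rw [hqdef]
        exact qmul_aux (ne_of_gt hη)
      have hMη : 0 ≤ M * η := mul_nonneg (le_of_lt hM0) (le_of_lt hη)
      refine le_trans ?_ (le_max_left _ _)
      linarith [hW, hE, hq2η, hMη]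
  have key2 : ∀ k : ℕ, V (p + k * ω) ≤ max (V p - k * (M * ω)) (K + M * ω) := by
    intro k
    induction k with
    | zero =>
      simp only [Nat.cast_zero, zero_mul, add_zero, sub_zero]
      exact le_max_left _ _
    | succ k ih =>
      have hcast : p + ((k:ℕ) + 1 : ℕ) * ω = p + k * ω + ω := by push_cast; ring
      rw [hcast]
      refine le_trans (key1 k) (max_le ?_ (le_max_right _ _))
      have hMω : 0 ≤ M * ω := mul_nonneg (le_of_lt hM0) (le_of_lt hω)
      rcases le_max_iff.1 ih with h' | h'
      · refine le_trans ?_ (le_max_left _ _)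
        push_cast
        linarith
      · refine le_trans ?_ (le_max_right _ _)
        linarith
  set k1 : ℕ := ⌈V p / (M * ω)⌉₊ with hk1def
  have hMω : 0 < M * ω := mul_pos hM0 hω
  have hk1 : V p - k1 * (M * ω) ≤ 0 := by
    have h1 : V p / (M * ω) ≤ k1 := Nat.le_ceil _
    rw [div_le_iff₀ hMω] at h1
    linarith
  have key3 : ∀ k : ℕ, k1 ≤ k → V (p + k * ω) ≤ K + M * ω := by
    intro k hk
    refine le_trans (key2 k) (max_le ?_ le_rfl)
    have : (k1:ℝ) * (M * ω) ≤ k * (M * ω) :=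
      mul_le_mul_of_nonneg_right (Nat.cast_le.2 hk) (le_of_lt hMω)
    have hK0 : 0 < K + M * ω := by positivity
    linarith
  -- final eventual bound
  have final : ∀ t, p + k1 * ω ≤ t → ∀ i, x t i ≤ umax * (K + 2 * M * ω) := by
    intro t htge i
    set r : ℝ := t - (p + k1 * ω) with hrdef
    have hr : 0 ≤ r := by simp only [hrdef]; linarith
    set j : ℕ := ⌊r / ω⌋₊ with hjdef
    have hj1 : (j:ℝ) * ω ≤ r := by
      have h1 : (j:ℝ) ≤ r / ω := Nat.floor_le (div_nonneg hr (le_of_lt hω))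
      calc (j:ℝ) * ω ≤ (r / ω) * ω := mul_le_mul_of_nonneg_right h1 (le_of_lt hω)
        _ = r := div_mul_cancel₀ r (ne_of_gt hω)
    have hj2 : r < ((j:ℝ) + 1) * ω := by
      have h1 : r / ω < (j:ℝ) + 1 := Nat.lt_floor_add_one _
      rw [div_lt_iff₀ hω] at h1
      linarith
    set A : ℝ := p + ((k1 + j : ℕ):ℝ) * ω with hAdef2
    have hAeq : A = p + k1 * ω + j * ω := by rw [hAdef2]; push_cast; ring
    have hAt : A ≤ t := by rw [hAeq]; simp only [hrdef] at hj1 ⊢; linarith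
    have htA : t ≤ A + ω := by rw [hAeq]; simp only [hrdef] at hj2 ⊢; linarith
    have hA : 0 < A := hApos (k1 + j)
    have hVt : V t ≤ V A + M * (t - A) :=
      barAt A t M hA hAt (fun s hs i' hi' => hboundM s (lt_of_lt_of_le hA hs.1) i' hi')
    have hVA : V A ≤ K + M * ω := key3 (k1 + j) (Nat.le_add_right _ _)
    have hVt2 : V t ≤ K + 2 * M * ω := by
      have h2 : M * (t - A) ≤ M * ω := mul_le_mul_of_nonneg_left (by linarith) (le_of_lt hM0)
      linarith
    have ht0 : (0:ℝ) ≤ t := le_trans (by linarith [hApos k1]) htge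
    have hxi : x t i = u i * z i t := by
      simp only [hzdef]
      rw [mul_div_assoc', mul_div_cancel_left₀ _ (ne_of_gt (hu i))]
    have hVt0 : 0 ≤ V t := le_of_lt (hVpos t ht0)
    calc x t i = u i * z i t := hxi
      _ ≤ u i * V t := mul_le_mul_of_nonneg_left (hVle i t) (le_of_lt (hu i))
      _ ≤ umax * V t := mul_le_mul_of_nonneg_right (hule i) hVt0
      _ ≤ umax * (K + 2 * M * ω) := mul_le_mul_of_nonneg_left hVt2 (le_of_lt humax)
  intro i
  have hbd : Filter.IsBoundedUnder (· ≥ ·) Filter.atTop (fun t => x t i) :=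
    ⟨0, Filter.eventually_map.2 ((Filter.eventually_ge_atTop 0).mono
      (fun t ht => le_of_lt (hpos t ht i)))⟩
  apply Filter.limsup_le_of_le hbd.isCoboundedUnder_le
  exact (Filter.eventually_ge_atTop (p + k1 * ω)).mono (fun t ht => final t ht i)

/-- Positivity and dissipativeness of the delay system
`x_i' = -d_i(t) x_i + ∑_{j≠i} a_{ij}(t) x_j + ∑_k β_{ik}(t) h_{ik}(t, x_i(t - τ_{ik}(t)))`
under hypotheses (H0)-(H4). -/
theorem stmt2
    (n m : ℕ) (hn : 1 ≤ n) (hm : 1 ≤ m) (ω : ℝ) (hω : 0 < ω)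
    (d : Fin n → ℝ → ℝ) (a : Fin n → Fin n → ℝ → ℝ)
    (β : Fin n → Fin m → ℝ → ℝ) (τd : Fin n → Fin m → ℝ → ℝ)
    (h : Fin n → Fin m → ℝ → ℝ → ℝ) (hminus : Fin n → ℝ → ℝ)
    -- (H0) ω-periodicity in t
    (hdper : ∀ i t, d i (t + ω) = d i t)
    (haper : ∀ i j t, a i j (t + ω) = a i j t)
    (hβper : ∀ i k t, β i k (t + ω) = β i k t)
    (hhper : ∀ i k t x, 0 ≤ x → h i k (t + ω) x = h i k t x)
    (hτper : ∀ i k t, τd i k (t + ω) = τd i k t)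
    -- (H1)
    (hdcont : ∀ i, Continuous (d i))
    (hacont : ∀ i j, j ≠ i → Continuous (a i j))
    (hdpos : ∀ i t, 0 < d i t)
    (hanneg : ∀ i j t, j ≠ i → 0 ≤ a i j t)
    -- (H2)
    (u : Fin n → ℝ) (hu : ∀ i, 0 < u i) (t0 : ℝ)
    (hH2 : ∀ i t, ∑ j ∈ Finset.univ.erase i, a i j t * u j ≤ d i t * u i)
    (hH2s : ∀ i, ∑ j ∈ Finset.univ.erase i, a i j t0 * u j < d i t0 * u i)
    -- (H3)
    (hτcont : ∀ i k, Continuous (τd i k)) (hτnneg : ∀ i k t, 0 ≤ τd i k t)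
    (hβcont : ∀ i k, Continuous (β i k)) (hβnneg : ∀ i k t, 0 ≤ β i k t)
    (hβpos : ∀ i t, 0 < ∑ k, β i k t)
    -- (H4)
    (hhbdd : ∀ i k, ∃ B, ∀ t x, 0 ≤ x → h i k t x ≤ B)
    (hhnneg : ∀ i k t x, 0 ≤ x → 0 ≤ h i k t x)
    (hhcont : ∀ i k, ContinuousOn (fun p : ℝ × ℝ => h i k p.1 p.2) {p : ℝ × ℝ | 0 ≤ p.2})
    (hhlip : ∀ i k t x, 0 ≤ x → ∃ ε > (0 : ℝ), ∃ L ≥ (0 : ℝ),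
        ∀ y ∈ Set.Icc (max 0 (x - ε)) (x + ε), ∀ z ∈ Set.Icc (max 0 (x - ε)) (x + ε),
          |h i k t y - h i k t z| ≤ L * |y - z|)
    (hh0 : ∀ i k t, h i k t 0 = 0)
    (hhge : ∀ i k t x, 0 ≤ x → hminus i x ≤ h i k t x)
    (hmcont : ∀ i, ContinuousOn (hminus i) (Set.Ici 0))
    (hmnneg : ∀ i x, 0 ≤ x → 0 ≤ hminus i x)
    (hm0 : ∀ i, hminus i 0 = 0)
    (hmpos : ∀ i x, 0 < x → 0 < hminus i x)
    (hmC1 : ∀ i, ∃ ε > (0 : ℝ), ∃ g : ℝ → ℝ, ContinuousOn g (Set.Icc 0 ε) ∧ g 0 = 1 ∧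
        ∀ x ∈ Set.Icc 0 ε, HasDerivWithinAt (hminus i) (g x) (Set.Icc 0 ε) x)
    -- τ is the maximal delay
    (τ : ℝ)
    (hτmax : IsGreatest {r : ℝ | ∃ i k, ∃ t ∈ Set.Icc 0 ω, τd i k t = r} τ) :
    -- (a) strict positivity of solutions with initial conditions in C₀
    (∀ x : ℝ → Fin n → ℝ,
      (∀ i, ContinuousOn (fun t => x t i) (Set.Ici (-τ))) →
      (∀ i, ∀ θ ∈ Set.Icc (-τ) 0, 0 ≤ x θ i) →
      (∀ i, 0 < x 0 i) →
      (∀ t > (0 : ℝ), ∀ i, HasDerivAt (fun s => x s i)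
          (-d i t * x t i + ∑ j ∈ Finset.univ.erase i, a i j t * x t j
            + ∑ k, β i k t * h i k t (x (t - τd i k t) i)) t) →
      ∀ t ≥ (0 : ℝ), ∀ i, 0 < x t i)
    ∧
    -- (b) dissipativeness: a uniform ultimate upper bound L
    (∃ L > (0 : ℝ), ∀ x : ℝ → Fin n → ℝ,
      (∀ i, ContinuousOn (fun t => x t i) (Set.Ici (-τ))) →
      (∀ i, ∀ θ ∈ Set.Icc (-τ) 0, 0 ≤ x θ i) →
      (∀ i, 0 < x 0 i) →
      (∀ t > (0 : ℝ), ∀ i, HasDerivAt (fun s => x s i)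
          (-d i t * x t i + ∑ j ∈ Finset.univ.erase i, a i j t * x t j
            + ∑ k, β i k t * h i k t (x (t - τd i k t) i)) t) →
      ∀ i, Filter.limsup (fun t => x t i) Filter.atTop ≤ L) := by
  have hτ0 : 0 ≤ τ := by
    obtain ⟨i, k, t, ht, rfl⟩ := hτmax.1
    exact hτnneg i k t
  have hτle : ∀ i k t, τd i k t ≤ τ := by
    intro i k t
    obtain ⟨y, hy, hfy⟩ := per_reduce hω (hτper i k) t
    rw [hfy]
    exact hτmax.2 ⟨i, k, y, hy, rfl⟩
  constructor
  · intro x hx hx0 hxpos0 hx'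
    exact pos_solution d a β τd h τ hτ0 hτle hτnneg hdcont hanneg hβnneg hhnneg
      x hx hx0 hxpos0 hx'
  · exact dissip hn ω hω d a β τd h hdper haper hβper hdcont hacont hanneg u hu t0 hH2 hH2s
      hβcont hβnneg hhbdd hhnneg hh0 τ hτ0 hτle hτnneg
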